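/- Let p, s > 0 with ps > 1, and let f be a continuous function on [a,b] with a < b. Then ∫_a^b ∫_a^b |f(x)−f(y)|^p / |x−y|^{1+ps} dy dx ≥ c · |f(b)−f(a)|^p / (b−a)^{ps−1}, where c = (ps−1)^p · (8(ps+1))^{−p} / 4. -/

import Mathlib

open MeasureTheory Set ENNReal Filter

lemma grr_star {p t c d : ℝ} (hp : 0 < p) (ht : 1 < t) (hc : 0 < c) (hcd : c ≤ d) :
    (d ^ ((1+t)/p) - c ^ ((1+t)/p)) / d ^ (2/p) ≤
      ((t+1)/(t-1)) * (d ^ ((t-1)/p) - c ^ ((t-1)/p)) := by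
  have hd : 0 < d := hc.trans_le hcd
  have hp' : p ≠ 0 := hp.ne'
  have ht' : t - 1 ≠ 0 := by linarith
  set θ := (t-1)/p with hθdef
  set A := (1+t)/p with hAdef
  have hθ : 0 < θ := div_pos (by linarith) hp
  set m := (t+1)/(t-1) with hmdef
  have hm : 1 ≤ m := (one_le_div (by linarith)).2 (by linarith)
  set x := c / d with hxdef
  have hx0 : 0 < x := div_pos hc hd
  have hx1 : x ≤ 1 := (div_le_one hd).2 hcd
  set y := x ^ θ with hydef
  have hy0 : 0 < y := Real.rpow_pos_of_pos hx0 _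
  have hy1 : y ≤ 1 := Real.rpow_le_one hx0.le hx1 hθ.le
  have bern : 1 + m * (y - 1) ≤ (1 + (y - 1)) ^ m :=
    one_add_mul_self_le_rpow_one_add (by linarith) hm
  have hym : (1 + (y - 1)) ^ m = x ^ A := by
    have h1 : (1 : ℝ) + (y - 1) = y := by ring
    rw [h1, hydef, ← Real.rpow_mul hx0.le]
    congr 1
    rw [hθdef, hmdef, hAdef]
    field_simp
    ring
  have key : 1 - x ^ A ≤ m * (1 - y) := by
    rw [hym] at bern; linarith
  have hcx : c = x * d := by rw [hxdef, div_mul_cancel₀ _ hd.ne']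
  have hdA : d ^ A / d ^ (2/p) = d ^ θ := by
    rw [← Real.rpow_sub hd]
    congr 1
    rw [hAdef, hθdef]
    field_simp
    ring
  have hcA : c ^ A = x ^ A * d ^ A := by
    rw [hcx, Real.mul_rpow hx0.le hd.le]
  have hcθ : c ^ θ = y * d ^ θ := by
    rw [hcx, Real.mul_rpow hx0.le hd.le, hydef]
  have e1 : (d ^ A - c ^ A) / d ^ (2/p) = d ^ θ - x ^ A * d ^ θ := by
    rw [hcA, sub_div, hdA, mul_div_assoc, hdA]
  rw [e1, hcθ]
  have hdθ : (0:ℝ) ≤ d ^ θ := (Real.rpow_pos_of_pos hd _).le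
  nlinarith [mul_le_mul_of_nonneg_right key hdθ]

lemma grr_good {κ : ℝ} (hκ : 1 < κ) {u v : ℝ} (huv : u < v)
    (g₁ g₂ : ℝ → ℝ≥0∞) (h₁ : Measurable g₁) (h₂ : Measurable g₂)
    (G₁ G₂ : ℝ≥0∞) (hG₁t : G₁ ≠ ⊤) (hG₂t : G₂ ≠ ⊤)
    (hG₁ : ∫⁻ x in Ioo u v, g₁ x ≤ G₁) (hG₂ : ∫⁻ x in Ioo u v, g₂ x ≤ G₂) :
    ∃ w ∈ Ioo u v, ENNReal.ofReal (v - u) * g₁ w ≤ ENNReal.ofReal (2*κ) * G₁ ∧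
      ENNReal.ofReal (v - u) * g₂ w ≤ ENNReal.ofReal (2*κ) * G₂ := by
  have hκ0 : (0:ℝ) < κ := by linarith
  have hd : (0:ℝ) < v - u := by linarith
  have key : ∀ g : ℝ → ℝ≥0∞, Measurable g → ∀ G : ℝ≥0∞, G ≠ ⊤ →
      (∫⁻ x in Ioo u v, g x ≤ G) →
      volume {x | x ∈ Ioo u v ∧ ENNReal.ofReal (2*κ) * G < ENNReal.ofReal (v - u) * g x}
        ≤ ENNReal.ofReal ((v - u)/(2*κ)) := by
    intro g hg G hGt hG
    rcases eq_or_ne G 0 with rfl | hG0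
    · have hz : ∫⁻ x in Ioo u v, g x = 0 := le_antisymm (by simpa using hG) zero_le
      rw [lintegral_eq_zero_iff hg] at hz
      rw [EventuallyEq, ae_restrict_iff' measurableSet_Ioo, ae_iff] at hz
      have hsub : {x | x ∈ Ioo u v ∧ ENNReal.ofReal (2*κ) * 0 < ENNReal.ofReal (v - u) * g x}
          ⊆ {x | ¬(x ∈ Ioo u v → g x = (fun _ => (0:ℝ≥0∞)) x)} := by
        rintro x ⟨hx1, hx2⟩
        simp only [mem_setOf_eq, Classical.not_imp]
        refine ⟨hx1, fun h => ?_⟩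
        rw [h, mul_zero] at hx2
        simp at hx2
      exact le_trans (le_of_eq (measure_mono_null hsub hz)) zero_le
    · set ε := ENNReal.ofReal (2*κ) * G with hεdef
      have hε0 : ε ≠ 0 := by
        simp only [hεdef, ne_eq, mul_eq_zero, not_or, ENNReal.ofReal_eq_zero, not_le]
        exact ⟨by linarith, hG0⟩
      have hεt : ε ≠ ⊤ := ENNReal.mul_ne_top ENNReal.ofReal_ne_top hGt
      set h : ℝ → ℝ≥0∞ := fun x => ENNReal.ofReal (v - u) * g x with hhdef
      have hhm : Measurable h := hg.const_mul _
      have markov := mul_meas_ge_le_lintegral₀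
        (μ := volume.restrict (Ioo u v)) hhm.aemeasurable ε
      have hint : ∫⁻ x in Ioo u v, h x ≤ ENNReal.ofReal (v - u) * G := by
        rw [hhdef]
        simp only
        rw [lintegral_const_mul _ hg]
        exact mul_le_mul_right hG _
      have hset : volume {x | x ∈ Ioo u v ∧ ε < h x}
          ≤ (volume.restrict (Ioo u v)) {x | ε ≤ h x} := by
        rw [Measure.restrict_apply (measurableSet_le measurable_const hhm)]
        apply measure_mono
        rintro x ⟨hx1, hx2⟩
        exact ⟨hx2.le, hx1⟩
      have step : ε * volume {x | x ∈ Ioo u v ∧ ε < h x} ≤ ENNReal.ofReal (v - u) * G :=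
        le_trans (mul_le_mul_right hset _) (le_trans markov hint)
      have : volume {x | x ∈ Ioo u v ∧ ε < h x} ≤ ENNReal.ofReal (v - u) * G / ε := by
        rw [ENNReal.le_div_iff_mul_le (Or.inl hε0) (Or.inl hεt), mul_comm]
        exact step
      refine le_trans this (le_of_eq ?_)
      rw [hεdef, ENNReal.mul_div_mul_right _ _ hG0 hGt,
        ENNReal.ofReal_div_of_pos (by linarith)]
  -- combine
  have hb1 := key g₁ h₁ G₁ hG₁t hG₁
  have hb2 := key g₂ h₂ G₂ hG₂t hG₂
  set bad₁ := {x | x ∈ Ioo u v ∧ ENNReal.ofReal (2*κ) * G₁ < ENNReal.ofReal (v - u) * g₁ x}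
  set bad₂ := {x | x ∈ Ioo u v ∧ ENNReal.ofReal (2*κ) * G₂ < ENNReal.ofReal (v - u) * g₂ x}
  have hbad : volume (bad₁ ∪ bad₂) ≤ ENNReal.ofReal ((v-u)/κ) := by
    refine le_trans (measure_union_le _ _) ?_
    refine le_trans (add_le_add hb1 hb2) (le_of_eq ?_)
    rw [← ENNReal.ofReal_add (by positivity) (by positivity)]
    congr 1
    field_simp
    ring
  have hne : (Ioo u v \ (bad₁ ∪ bad₂)).Nonempty := by
    rcases eq_empty_or_nonempty (Ioo u v \ (bad₁ ∪ bad₂)) with he | hne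
    · exfalso
      have : volume (Ioo u v) ≤ volume (bad₁ ∪ bad₂) := by
        apply measure_mono
        intro x hx
        by_contra hxb
        exact (eq_empty_iff_forall_notMem.1 he x) ⟨hx, hxb⟩
      rw [Real.volume_Ioo] at this
      have hlt : (v-u)/κ < v - u := by
        rw [div_lt_iff₀ hκ0]
        nlinarith
      exact absurd (le_trans this hbad)
        (not_le.2 ((ENNReal.ofReal_lt_ofReal_iff hd).2 hlt))
    · exact hne
  obtain ⟨w, hw⟩ := hne
  refine ⟨w, hw.1, ?_, ?_⟩
  · have := fun h => hw.2 (Or.inl h)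
    simp only [bad₁, mem_setOf_eq] at this
    by_contra hc
    exact this ⟨hw.1, not_le.1 hc⟩
  · have := fun h => hw.2 (Or.inr h)
    simp only [bad₂, mem_setOf_eq] at this
    by_contra hc
    exact this ⟨hw.1, not_le.1 hc⟩


set_option maxHeartbeats 2000000 in
lemma grr_oneSided (p t a b κ : ℝ) (hp : 0 < p) (ht : 1 < t) (hab : a < b)
    (hκ1 : 1 < κ) (hκsq : κ * κ = (2:ℝ) ^ (p/(t+1)))
    (f : ℝ → ℝ) (hf : Continuous f)
    (F : ℝ → ℝ → ℝ≥0∞)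
    (hFdef : ∀ x y, F x y = ENNReal.ofReal (|f x - f y| ^ p / |x - y| ^ (1 + t)))
    (II : ℝ → ℝ≥0∞) (hIIdef : ∀ x, II x = ∫⁻ y in Icc a b, F x y)
    (BB : ℝ≥0∞) (hBBdef : BB = ∫⁻ x in Icc a b, II x) (hBBt : BB ≠ ⊤)
    (x₀ : ℝ) (hx₀ : x₀ ∈ Ioo a b)
    (hIx₀ : ENNReal.ofReal (b - a) * II x₀ ≤ ENNReal.ofReal (2*κ) * BB) :
    |f x₀ - f a| ≤ 4 * ((t+1)/(t-1)) * (4 * BB.toReal) ^ p⁻¹ * (b - a) ^ ((t-1)/p) := by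
  have hp' : p ≠ 0 := hp.ne'
  have ht0 : (0:ℝ) < t + 1 := by linarith
  have ht1 : (0:ℝ) < t - 1 := by linarith
  set β := p / (t+1) with hβdef
  have hβ0 : 0 < β := div_pos hp ht0
  set γ := (2:ℝ) ^ (-β) with hγdef
  have hγ0 : 0 < γ := Real.rpow_pos_of_pos two_pos _
  have hγ1 : γ < 1 := Real.rpow_lt_one_of_one_lt_of_neg one_lt_two (by linarith)
  have hγκ : γ * (κ * κ) = 1 := by
    rw [hκsq, hγdef, ← Real.rpow_add two_pos]
    simp
  have hκ0 : (0:ℝ) < κ := by linarith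
  -- half property : γ ^ ((1+t)/p) = 1/2
  have hγhalf : γ ^ ((1+t)/p) = 1/2 := by
    rw [hγdef, ← Real.rpow_mul (by norm_num : (0:ℝ) ≤ 2)]
    have h9 : -β * ((1+t)/p) = -1 := by rw [hβdef]; field_simp; ring
    rw [h9, Real.rpow_neg_one]
    norm_num
  -- measurability
  have hFm : ∀ c, Measurable (F c) := by
    intro c
    have he : (F c) = fun y => ENNReal.ofReal (|f c - f y| ^ p / |c - y| ^ (1+t)) :=
      funext (hFdef c)
    rw [he]
    apply Measurable.ennreal_ofReal
    exact (((Real.continuous_rpow_const hp.le).comp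
        (continuous_abs.comp (continuous_const.sub hf))).measurable).div
      (((Real.continuous_rpow_const (by linarith : (0:ℝ) ≤ 1 + t)).comp
        (continuous_abs.comp (continuous_const.sub continuous_id))).measurable)
  have hIIm : Measurable II := by
    have he : II = fun x => ∫⁻ y in Icc a b, F x y := funext hIIdef
    rw [he]
    have huc : Measurable (Function.uncurry F) := by
      have he2 : Function.uncurry F =
          fun q : ℝ × ℝ => ENNReal.ofReal (|f q.1 - f q.2| ^ p / |q.1 - q.2| ^ (1+t)) := by
        funext q
        exact hFdef q.1 q.2
      rw [he2]
      apply Measurable.ennreal_ofReal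
      exact (((Real.continuous_rpow_const hp.le).comp
          (continuous_abs.comp ((hf.comp continuous_fst).sub (hf.comp continuous_snd)))).measurable).div
        (((Real.continuous_rpow_const (by linarith : (0:ℝ) ≤ 1 + t)).comp
          (continuous_abs.comp (continuous_fst.sub continuous_snd))).measurable)
    exact huc.lintegral_prod_right
  -- Good predicate
  set Good : ℝ → ℝ → Prop := fun d xx => 0 < d ∧ d ≤ b - a ∧ a < xx ∧ xx < a + d ∧
      ENNReal.ofReal d * II xx ≤ ENNReal.ofReal (2*κ) * BB with hGooddef
  have hIIfin : ∀ d xx, Good d xx → II xx ≠ ⊤ := by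
    intro d xx hG
    intro htop
    have h1 := hG.2.2.2.2
    rw [htop] at h1
    rw [ENNReal.mul_top (by simp [ENNReal.ofReal_eq_zero]; linarith [hG.1])] at h1
    exact (ENNReal.mul_ne_top ENNReal.ofReal_ne_top hBBt) (top_le_iff.1 h1)
  have step : ∀ d xx, Good d xx → ∃ yy, Good ((xx - a)*γ) yy ∧
      ENNReal.ofReal ((xx - a)*γ) * F xx yy ≤ ENNReal.ofReal (2*κ) * II xx := by
    intro d xx hG
    obtain ⟨hd0, hdle, hax, hxad, hinv⟩ := hG
    have hxb : xx < b := by linarith [hxad, hdle]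
    have hd'0 : 0 < (xx - a)*γ := mul_pos (by linarith) hγ0
    have hd'lt : (xx - a)*γ < xx - a := by nlinarith
    have hsub : Ioo a (a + (xx - a)*γ) ⊆ Icc a b := by
      intro z hz
      exact ⟨hz.1.le, by nlinarith [hz.2]⟩
    obtain ⟨w, hw, hw1, hw2⟩ := grr_good hκ1 (by linarith : a < a + (xx - a)*γ)
      II (F xx) hIIm (hFm xx) BB (II xx) hBBt (hIIfin d xx ⟨hd0, hdle, hax, hxad, hinv⟩)
      (le_trans (lintegral_mono_set hsub) (le_of_eq (hBBdef.symm)))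
      (le_trans (lintegral_mono_set hsub) (le_of_eq ((hIIdef xx).symm)))
    rw [add_sub_cancel_left] at hw1 hw2
    refine ⟨w, ⟨hd'0, by linarith, hw.1, hw.2, hw1⟩, hw2⟩
  have hseq : ∃ (dd : ℕ → ℝ) (xx : ℕ → ℝ), dd 0 = b - a ∧ xx 0 = x₀ ∧
      (∀ n, Good (dd n) (xx n)) ∧ (∀ n, dd (n+1) = (xx n - a) * γ) ∧
      (∀ n, ENNReal.ofReal (dd (n+1)) * F (xx n) (xx (n+1)) ≤
        ENNReal.ofReal (2*κ) * II (xx n)) := by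
    choose stepf hstepf using step
    have good₀ : Good (b - a) x₀ := ⟨by linarith, le_refl _, hx₀.1, by linarith [hx₀.2], hIx₀⟩
    let Z : ℕ → {q : ℝ × ℝ // Good q.1 q.2} := fun n =>
      Nat.rec ⟨(b - a, x₀), good₀⟩
        (fun _ ih => ⟨((ih.1.2 - a) * γ, stepf ih.1.1 ih.1.2 ih.2),
          (hstepf ih.1.1 ih.1.2 ih.2).1⟩) n
    exact ⟨fun n => (Z n).1.1, fun n => (Z n).1.2, rfl, rfl, fun n => (Z n).2,
      fun n => rfl, fun n => (hstepf (Z n).1.1 (Z n).1.2 (Z n).2).2⟩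
  obtain ⟨dd, xx, hdd0, hx0eq, hZG, hdd, hrel⟩ := hseq
  have hdpos : ∀ n, 0 < dd n := fun n => (hZG n).1
  have hdle : ∀ n, dd n ≤ b - a := fun n => (hZG n).2.1
  have hax : ∀ n, a < xx n := fun n => (hZG n).2.2.1
  have hxad : ∀ n, xx n < a + dd n := fun n => (hZG n).2.2.2.1
  have hinv : ∀ n, ENNReal.ofReal (dd n) * II (xx n) ≤ ENNReal.ofReal (2*κ) * BB :=
    fun n => (hZG n).2.2.2.2
  have hddlt : ∀ n, dd (n+1) < dd n * γ := by
    intro n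
    rw [hdd n]
    have h1 := hxad n
    have h2 := hax n
    nlinarith
  have hxdec : ∀ n, xx (n+1) < xx n := by
    intro n
    have h1 : xx (n+1) < a + dd (n+1) := hxad (n+1)
    rw [hdd n] at h1
    nlinarith [hax n]
  have hBBr0 : 0 ≤ BB.toReal := ENNReal.toReal_nonneg
  have stepR : ∀ n, |f (xx n) - f (xx (n+1))| ^ p ≤
      4 * BB.toReal * ((xx n - a) ^ (1+t) / (dd (n+1) * dd (n+1))) := by
    intro n
    have E1 : ENNReal.ofReal (dd n) * (ENNReal.ofReal (dd (n+1)) * F (xx n) (xx (n+1))) ≤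
        ENNReal.ofReal (2*κ) * (ENNReal.ofReal (2*κ) * BB) := by
      calc ENNReal.ofReal (dd n) * (ENNReal.ofReal (dd (n+1)) * F (xx n) (xx (n+1)))
          ≤ ENNReal.ofReal (dd n) * (ENNReal.ofReal (2*κ) * II (xx n)) :=
            mul_le_mul_right (hrel n) _
        _ = ENNReal.ofReal (2*κ) * (ENNReal.ofReal (dd n) * II (xx n)) := by ring
        _ ≤ ENNReal.ofReal (2*κ) * (ENNReal.ofReal (2*κ) * BB) := mul_le_mul_right (hinv n) _
    set q : ℝ := |f (xx n) - f (xx (n+1))| ^ p / |xx n - xx (n+1)| ^ (1+t) with hq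
    have hq0 : 0 ≤ q := div_nonneg (Real.rpow_nonneg (abs_nonneg _) _)
      (Real.rpow_nonneg (abs_nonneg _) _)
    have hFq : F (xx n) (xx (n+1)) = ENNReal.ofReal q := by rw [hFdef, hq]
    have E2 : ENNReal.ofReal (dd n * (dd (n+1) * q)) ≤
        ENNReal.ofReal (2*κ) * (ENNReal.ofReal (2*κ) * BB) := by
      rw [ENNReal.ofReal_mul (hdpos n).le, ENNReal.ofReal_mul (hdpos (n+1)).le, ← hFq]
      exact E1
    have hRt : ENNReal.ofReal (2*κ) * (ENNReal.ofReal (2*κ) * BB) ≠ ⊤ :=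
      ENNReal.mul_ne_top ENNReal.ofReal_ne_top (ENNReal.mul_ne_top ENNReal.ofReal_ne_top hBBt)
    have R1 : dd n * (dd (n+1) * q) ≤ 2*κ * (2*κ * BB.toReal) := by
      have h5 := (ENNReal.ofReal_le_iff_le_toReal hRt).1 E2
      rwa [ENNReal.toReal_mul, ENNReal.toReal_mul,
        ENNReal.toReal_ofReal (by positivity : (0:ℝ) ≤ 2*κ)] at h5
    have hDpos : 0 < xx n - xx (n+1) := sub_pos.2 (hxdec n)
    have hDabs : |xx n - xx (n+1)| = xx n - xx (n+1) := abs_of_pos hDpos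
    have hDle : xx n - xx (n+1) ≤ xx n - a := by linarith [hax (n+1)]
    have hden : 0 < (xx n - xx (n+1)) ^ (1+t) := Real.rpow_pos_of_pos hDpos _
    have hfq : |f (xx n) - f (xx (n+1))| ^ p = q * (xx n - xx (n+1)) ^ (1+t) := by
      rw [hq, hDabs, div_mul_cancel₀ _ hden.ne']
    have hdd01 : 0 < dd n * dd (n+1) := mul_pos (hdpos n) (hdpos (n+1))
    have hq2 : q ≤ 2*κ*(2*κ*BB.toReal) / (dd n * dd (n+1)) := by
      rw [le_div_iff₀ hdd01]
      calc q * (dd n * dd (n+1)) = dd n * (dd (n+1) * q) := by ring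
        _ ≤ _ := R1
    have hκκ0 : (0:ℝ) < κ * κ := mul_pos hκ0 hκ0
    have hdnlow : κ * κ * dd (n+1) ≤ dd n := by
      have h1 := hddlt n
      calc κ * κ * dd (n+1) ≤ κ * κ * (dd n * γ) := by nlinarith
        _ = dd n * (γ * (κ * κ)) := by ring
        _ = dd n := by rw [hγκ, mul_one]
    have hδpow : (0:ℝ) ≤ (xx n - a) ^ (1+t) := Real.rpow_nonneg (by linarith [hax n]) _
    have h2 : 2*κ*(2*κ*BB.toReal) / (dd n * dd (n+1)) ≤
        4*BB.toReal/(dd (n+1)*dd (n+1)) := by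
      rw [div_le_div_iff₀ hdd01 (mul_pos (hdpos (n+1)) (hdpos (n+1)))]
      calc 2*κ*(2*κ*BB.toReal)*(dd (n+1)*dd (n+1))
          = (4*BB.toReal*dd (n+1))*(κ*κ*dd (n+1)) := by ring
        _ ≤ (4*BB.toReal*dd (n+1))*(dd n) := mul_le_mul_of_nonneg_left hdnlow
            (mul_nonneg (by positivity : (0:ℝ) ≤ 4*BB.toReal) (hdpos (n+1)).le)
        _ = 4*BB.toReal*(dd n * dd (n+1)) := by ring
    calc |f (xx n) - f (xx (n+1))| ^ p = q * (xx n - xx (n+1)) ^ (1+t) := hfq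
      _ ≤ (2*κ*(2*κ*BB.toReal) / (dd n * dd (n+1))) * (xx n - a) ^ (1+t) := by
          apply mul_le_mul hq2 (Real.rpow_le_rpow hDpos.le hDle (by linarith)) hden.le
          exact div_nonneg (by positivity) hdd01.le
      _ ≤ (4*BB.toReal/(dd (n+1)*dd (n+1))) * (xx n - a) ^ (1+t) :=
          mul_le_mul_of_nonneg_right h2 hδpow
      _ = 4 * BB.toReal * ((xx n - a) ^ (1+t) / (dd (n+1) * dd (n+1))) := by ring
  set θ := (t-1)/p with hθdef
  have hθpos : 0 < θ := div_pos ht1 hp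
  set m := (t+1)/(t-1) with hmdef
  have hm0 : 0 < m := div_pos ht0 ht1
  have stepRR : ∀ n, |f (xx n) - f (xx (n+1))| ≤
      (4*BB.toReal) ^ p⁻¹ * ((xx n - a) ^ ((1+t)/p) / (dd (n+1)) ^ (2/p)) := by
    intro n
    have h0 : 0 ≤ |f (xx n) - f (xx (n+1))| := abs_nonneg _
    have hδ0 : (0:ℝ) ≤ xx n - a := by linarith [hax n]
    have h1 : |f (xx n) - f (xx (n+1))| = (|f (xx n) - f (xx (n+1))| ^ p) ^ p⁻¹ := by
      rw [Real.rpow_rpow_inv h0 hp']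
    rw [h1]
    refine le_trans (Real.rpow_le_rpow (Real.rpow_nonneg h0 p) (stepR n)
      (inv_nonneg.2 hp.le)) (le_of_eq ?_)
    have h3 : dd (n+1) * dd (n+1) = dd (n+1) ^ (2:ℝ) := by
      rw [show (2:ℝ) = ((2:ℕ):ℝ) by norm_num, Real.rpow_natCast]
      ring
    have e1 : ((xx n - a) ^ (1+t)) ^ p⁻¹ = (xx n - a) ^ ((1+t)/p) := by
      rw [← Real.rpow_mul hδ0, ← div_eq_mul_inv]
    have e2 : (dd (n+1) * dd (n+1)) ^ p⁻¹ = dd (n+1) ^ (2/p) := by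
      rw [h3, ← Real.rpow_mul (hdpos (n+1)).le, ← div_eq_mul_inv]
    rw [Real.mul_rpow (by positivity : (0:ℝ) ≤ 4*BB.toReal)
      (div_nonneg (Real.rpow_nonneg hδ0 _) (mul_pos (hdpos (n+1)) (hdpos (n+1))).le),
      Real.div_rpow (Real.rpow_nonneg hδ0 _) (mul_pos (hdpos (n+1)) (hdpos (n+1))).le,
      e1, e2]
  have rhoChain : ∀ n, (xx n - a) ^ ((1+t)/p) / (dd (n+1)) ^ (2/p) ≤
      4 * m * ((dd (n+1)) ^ θ - (dd (n+2)) ^ θ) := by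
    intro n
    have hδpos : 0 < xx n - a := by linarith [hax n]
    have hdd1 : 0 < dd (n+1) := hdpos (n+1)
    have hdd2 : 0 < dd (n+2) := hdpos (n+2)
    have hdd21 : dd (n+2) ≤ dd (n+1) := by
      have h1 := hddlt (n+1)
      have h2 : dd (n+1) * γ ≤ dd (n+1) * 1 :=
        mul_le_mul_of_nonneg_left hγ1.le (hdpos (n+1)).le
      rw [mul_one] at h2
      linarith
    have hρ1 : (xx n - a) ^ ((1+t)/p) = 2 * (dd (n+1)) ^ ((1+t)/p) := by
      rw [hdd n, Real.mul_rpow hδpos.le hγ0.le, hγhalf]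
      ring
    have hρ2 : (dd (n+2)) ^ ((1+t)/p) ≤ 1/2 * (dd (n+1)) ^ ((1+t)/p) := by
      rw [hdd (n+1), Real.mul_rpow (by linarith [hax (n+1)] : (0:ℝ) ≤ xx (n+1) - a) hγ0.le,
        hγhalf]
      have h6 : (xx (n+1) - a) ^ ((1+t)/p) ≤ (dd (n+1)) ^ ((1+t)/p) :=
        Real.rpow_le_rpow (by linarith [hax (n+1)]) (by linarith [hxad (n+1)])
          (div_nonneg (by linarith) hp.le)
      linarith
    have hstar := grr_star hp ht hdd2 hdd21
    have hpow2 : 0 < (dd (n+1)) ^ (2/p) := Real.rpow_pos_of_pos hdd1 _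
    rw [hρ1]
    calc 2 * dd (n+1) ^ ((1+t)/p) / dd (n+1) ^ (2/p)
        ≤ (4 * (dd (n+1) ^ ((1+t)/p) - dd (n+2) ^ ((1+t)/p))) / dd (n+1) ^ (2/p) := by
          rw [div_le_div_iff_of_pos_right hpow2]
          linarith [hρ2]
      _ = 4 * ((dd (n+1) ^ ((1+t)/p) - dd (n+2) ^ ((1+t)/p)) / dd (n+1) ^ (2/p)) := by
          ring
      _ ≤ 4 * (m * ((dd (n+1)) ^ θ - (dd (n+2)) ^ θ)) := by
          have h7 := hstar
          rw [← hθdef, ← hmdef] at h7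
          linarith
      _ = 4 * m * ((dd (n+1)) ^ θ - (dd (n+2)) ^ θ) := by ring
  set C := 4 * m * (4*BB.toReal) ^ p⁻¹ with hCdef
  have hC0 : 0 ≤ C := by
    have : (0:ℝ) ≤ (4*BB.toReal) ^ p⁻¹ := Real.rpow_nonneg (by positivity) _
    rw [hCdef]
    positivity
  have stepFin : ∀ n, |f (xx n) - f (xx (n+1))| ≤ C * ((dd (n+1)) ^ θ - (dd (n+2)) ^ θ) := by
    intro n
    refine le_trans (stepRR n) ?_
    have h8 := mul_le_mul_of_nonneg_left (rhoChain n)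
      (Real.rpow_nonneg (by positivity : (0:ℝ) ≤ 4*BB.toReal) p⁻¹)
    calc (4*BB.toReal) ^ p⁻¹ * ((xx n - a) ^ ((1+t)/p) / (dd (n+1)) ^ (2/p))
        ≤ (4*BB.toReal) ^ p⁻¹ * (4 * m * ((dd (n+1)) ^ θ - (dd (n+2)) ^ θ)) := h8
      _ = C * ((dd (n+1)) ^ θ - (dd (n+2)) ^ θ) := by rw [hCdef]; ring
  have sumBound : ∀ N, |f (xx 0) - f (xx N)| ≤ C * (b-a) ^ θ := by
    intro N
    have h1 : dist (f (xx 0)) (f (xx N)) ≤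
        ∑ i ∈ Finset.range N, dist (f (xx i)) (f (xx (i+1))) :=
      dist_le_range_sum_dist (fun n => f (xx n)) N
    rw [Real.dist_eq] at h1
    have h2 : ∑ i ∈ Finset.range N, dist (f (xx i)) (f (xx (i+1))) ≤
        ∑ i ∈ Finset.range N, C * ((dd (i+1)) ^ θ - (dd (i+2)) ^ θ) := by
      apply Finset.sum_le_sum
      intro i _
      rw [Real.dist_eq]
      exact stepFin i
    have h3 : ∑ i ∈ Finset.range N, C * ((dd (i+1)) ^ θ - (dd (i+2)) ^ θ) =
        C * ((dd 1) ^ θ - (dd (N+1)) ^ θ) := by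
      rw [← Finset.mul_sum]
      congr 1
      exact Finset.sum_range_sub' (fun i => (dd (i+1)) ^ θ) N
    have h4 : (dd 1) ^ θ - (dd (N+1)) ^ θ ≤ (b-a) ^ θ := by
      have h5 : (dd 1) ^ θ ≤ (b-a) ^ θ := Real.rpow_le_rpow (hdpos 1).le (hdle 1) hθpos.le
      have h6 : (0:ℝ) ≤ (dd (N+1)) ^ θ := Real.rpow_nonneg (hdpos (N+1)).le _
      linarith
    calc |f (xx 0) - f (xx N)| ≤ _ := h1
      _ ≤ _ := h2
      _ = _ := h3
      _ ≤ C * (b-a) ^ θ := mul_le_mul_of_nonneg_left h4 hC0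
  have hddN : ∀ n, dd n ≤ (b - a) * γ ^ n := by
    intro n
    induction n with
    | zero => simp [hdd0]
    | succ k ih =>
      calc dd (k+1) ≤ dd k * γ := (hddlt k).le
        _ ≤ (b-a)*γ^k * γ := mul_le_mul_of_nonneg_right ih hγ0.le
        _ = (b-a)*γ^(k+1) := by ring
  have hxa : Tendsto xx atTop (nhds a) := by
    apply tendsto_of_tendsto_of_tendsto_of_le_of_le (g := fun _ : ℕ => a)
      (h := fun n : ℕ => a + (b-a)*γ^n) tendsto_const_nhds ?_ (fun n => (hax n).le) ?_
    · have h9 : Tendsto (fun n : ℕ => (b-a)*γ^n) atTop (nhds 0) := by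
        simpa using (tendsto_pow_atTop_nhds_zero_of_lt_one hγ0.le hγ1).const_mul (b-a)
      simpa using h9.const_add a
    · intro n
      have h10 := hxad n
      have h11 := hddN n
      show xx n ≤ a + (b - a) * γ ^ n
      linarith
  have hfx : Tendsto (fun N => |f (xx 0) - f (xx N)|) atTop (nhds |f (xx 0) - f a|) := by
    have h1 : Tendsto (fun N => f (xx N)) atTop (nhds (f a)) := (hf.tendsto a).comp hxa
    exact (tendsto_const_nhds.sub h1).abs
  have final : |f (xx 0) - f a| ≤ C * (b-a) ^ θ :=
    le_of_tendsto hfx (Eventually.of_forall sumBound)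
  rw [hx0eq] at final
  calc |f x₀ - f a| ≤ C * (b-a)^θ := final
    _ = 4 * m * (4*BB.toReal) ^ p⁻¹ * (b-a) ^ θ := by rw [hCdef]

set_option maxHeartbeats 1000000 in
theorem stmt7 (p s a b : ℝ) (hp : 0 < p) (hs : 0 < s) (hps : 1 < p * s)
    (hab : a < b) (f : ℝ → ℝ) (hf : ContinuousOn f (Icc a b)) :
    ENNReal.ofReal ((p * s - 1) ^ p * (8 * (p * s + 1)) ^ (-p) / 4 *
        (|f b - f a| ^ p / (b - a) ^ (p * s - 1))) ≤
      ∫⁻ x in Icc a b, ∫⁻ y in Icc a b,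
        ENNReal.ofReal (|f x - f y| ^ p / |x - y| ^ (1 + p * s)) := by
  obtain ⟨g, hg, hgf⟩ : ∃ g : ℝ → ℝ, Continuous g ∧ ∀ x ∈ Icc a b, g x = f x := by
    refine ⟨IccExtend hab.le ((Icc a b).restrict f), Continuous.Icc_extend' hf.restrict, ?_⟩
    intro x hx
    rw [IccExtend_of_mem _ _ hx]
    rfl
  have hgb : g b = f b := hgf b (right_mem_Icc.2 hab.le)
  have hga : g a = f a := hgf a (left_mem_Icc.2 hab.le)
  rw [← hgb, ← hga]
  have hint : (∫⁻ x in Icc a b, ∫⁻ y in Icc a b,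
      ENNReal.ofReal (|f x - f y| ^ p / |x - y| ^ (1 + p*s))) =
      ∫⁻ x in Icc a b, ∫⁻ y in Icc a b,
      ENNReal.ofReal (|g x - g y| ^ p / |x - y| ^ (1 + p*s)) := by
    apply setLIntegral_congr_fun measurableSet_Icc
    intro x hx
    apply setLIntegral_congr_fun measurableSet_Icc
    intro y hy
    beta_reduce
    rw [hgf x hx, hgf y hy]
  rw [hint]
  clear hint hf
  set t := p * s with htdef
  have ht : 1 < t := hps
  have hp' : p ≠ 0 := hp.ne'
  have ht0 : (0:ℝ) < t + 1 := by linarith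
  have ht1 : (0:ℝ) < t - 1 := by linarith
  set BBe := (∫⁻ x in Icc a b, ∫⁻ y in Icc a b,
      ENNReal.ofReal (|g x - g y| ^ p / |x - y| ^ (1 + t))) with hBBe
  by_cases hT : BBe = ⊤
  · rw [hT]; exact le_top
  set II : ℝ → ℝ≥0∞ := fun x => ∫⁻ y in Icc a b,
      ENNReal.ofReal (|g x - g y| ^ p / |x - y| ^ (1 + t)) with hIIdef
  have hBBII : BBe = ∫⁻ x in Icc a b, II x := rfl
  -- measurability
  have hFm : ∀ c : ℝ, Measurable (fun y => ENNReal.ofReal (|g c - g y| ^ p / |c - y| ^ (1+t))) := by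
    intro c
    apply Measurable.ennreal_ofReal
    exact (((Real.continuous_rpow_const hp.le).comp
        (continuous_abs.comp (continuous_const.sub hg))).measurable).div
      (((Real.continuous_rpow_const (by linarith : (0:ℝ) ≤ 1 + t)).comp
        (continuous_abs.comp (continuous_const.sub continuous_id))).measurable)
  have hIIm : Measurable II := by
    have huc : Measurable (Function.uncurry
        (fun x y : ℝ => ENNReal.ofReal (|g x - g y| ^ p / |x - y| ^ (1+t)))) := by
      apply Measurable.ennreal_ofReal
      exact (((Real.continuous_rpow_const hp.le).comp
          (continuous_abs.comp ((hg.comp continuous_fst).sub (hg.comp continuous_snd)))).measurable).div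
        (((Real.continuous_rpow_const (by linarith : (0:ℝ) ≤ 1 + t)).comp
          (continuous_abs.comp (continuous_fst.sub continuous_snd))).measurable)
    exact huc.lintegral_prod_right
  -- kappa
  set κ := (2:ℝ) ^ (p/(2*(t+1))) with hκdef
  have hκ1 : 1 < κ := by
    rw [hκdef]
    apply Real.one_lt_rpow_iff_of_pos two_pos |>.2
    left
    constructor
    · norm_num
    · positivity
  have hκsq : κ * κ = (2:ℝ) ^ (p/(t+1)) := by
    rw [hκdef, ← Real.rpow_add two_pos]
    congr 1
    field_simp
    ring
  -- initial point
  obtain ⟨x₀, hx₀, hIx₀, -⟩ := grr_good hκ1 hab II II hIIm hIIm BBe BBe hT hT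
    (le_trans (lintegral_mono_set Ioo_subset_Icc_self) (le_of_eq hBBII.symm))
    (le_trans (lintegral_mono_set Ioo_subset_Icc_self) (le_of_eq hBBII.symm))
  -- bound toward a
  have bound1 : |g x₀ - g a| ≤
      4 * ((t+1)/(t-1)) * (4 * BBe.toReal) ^ p⁻¹ * (b-a) ^ ((t-1)/p) :=
    grr_oneSided p t a b κ hp ht hab hκ1 hκsq g hg
      (fun x y => ENNReal.ofReal (|g x - g y| ^ p / |x - y| ^ (1 + t))) (fun x y => rfl)
      II (fun x => rfl) BBe hBBII hT x₀ hx₀ hIx₀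
  -- reflection
  have hrefl : ∀ h : ℝ → ℝ≥0∞, Measurable h →
      (∫⁻ u in Icc a b, h (a + b - u)) = ∫⁻ u in Icc a b, h u := by
    intro h hm
    have hT' : MeasurePreserving (fun u : ℝ => a + b - u) volume volume :=
      Measure.measurePreserving_sub_left volume (a+b)
    have hpre : (fun u : ℝ => a + b - u) ⁻¹' (Icc a b) = Icc a b := by
      ext u
      simp only [mem_preimage, mem_Icc]
      constructor <;> rintro ⟨h1, h2⟩ <;> constructor <;> linarith
    have h2 := (hT'.restrict_preimage (s := Icc a b) measurableSet_Icc).lintegral_comp hm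
    rwa [hpre] at h2
  set g' : ℝ → ℝ := fun x => g (a + b - x) with hg'def
  have hg' : Continuous g' := hg.comp (continuous_const.sub continuous_id)
  set II' : ℝ → ℝ≥0∞ := fun x => ∫⁻ y in Icc a b,
      ENNReal.ofReal (|g' x - g' y| ^ p / |x - y| ^ (1 + t)) with hII'def
  have hF'F : ∀ x y : ℝ, ENNReal.ofReal (|g' x - g' y| ^ p / |x - y| ^ (1 + t)) =
      ENNReal.ofReal (|g (a+b-x) - g (a+b-y)| ^ p / |(a+b-x) - (a+b-y)| ^ (1 + t)) := by
    intro x y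
    have e : |(a+b-x) - (a+b-y)| = |x - y| := by
      rw [abs_sub_comm]
      congr 1
      ring
    rw [e, hg'def]
  have hII' : ∀ x, II' x = II (a+b-x) := by
    intro x
    calc II' x = ∫⁻ y in Icc a b,
        ENNReal.ofReal (|g (a+b-x) - g (a+b-y)| ^ p / |(a+b-x) - (a+b-y)| ^ (1 + t)) :=
          lintegral_congr (fun y => hF'F x y)
      _ = ∫⁻ y in Icc a b,
          ENNReal.ofReal (|g (a+b-x) - g y| ^ p / |(a+b-x) - y| ^ (1 + t)) :=
          hrefl _ (hFm (a+b-x))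
      _ = II (a+b-x) := rfl
  set BB' := (∫⁻ x in Icc a b, II' x) with hBB'def
  have hBB' : BB' = BBe := by
    calc BB' = ∫⁻ x in Icc a b, II (a+b-x) := lintegral_congr hII'
      _ = ∫⁻ x in Icc a b, II x := hrefl II hIIm
      _ = BBe := hBBII.symm
  have hx₀' : a + b - x₀ ∈ Ioo a b := ⟨by linarith [hx₀.2], by linarith [hx₀.1]⟩
  have hIx₀' : ENNReal.ofReal (b - a) * II' (a + b - x₀) ≤ ENNReal.ofReal (2*κ) * BB' := by
    rw [hII', hBB']
    have e : a + b - (a + b - x₀) = x₀ := by ring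
    rw [e]
    exact hIx₀
  have bound2 : |g' (a + b - x₀) - g' a| ≤
      4 * ((t+1)/(t-1)) * (4 * BB'.toReal) ^ p⁻¹ * (b-a) ^ ((t-1)/p) :=
    grr_oneSided p t a b κ hp ht hab hκ1 hκsq g' hg'
      (fun x y => ENNReal.ofReal (|g' x - g' y| ^ p / |x - y| ^ (1 + t))) (fun x y => rfl)
      II' (fun x => rfl) BB' rfl (by rw [hBB']; exact hT) (a + b - x₀) hx₀' hIx₀'
  have hg'x₀ : g' (a + b - x₀) = g x₀ := by
    rw [hg'def]
    congr 1
    ring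
  have hg'a : g' a = g b := by
    rw [hg'def]
    congr 1
    ring
  rw [hg'x₀, hg'a, hBB'] at bound2
  -- combine
  set m := (t+1)/(t-1) with hmdef
  set Br := BBe.toReal with hBr
  have hBr0 : 0 ≤ Br := ENNReal.toReal_nonneg
  set M := 4 * m * (4 * Br) ^ p⁻¹ * (b-a) ^ ((t-1)/p) with hMdef
  have hD : |g b - g a| ≤ 2 * M := by
    have htri : |g b - g a| ≤ |g b - g x₀| + |g x₀ - g a| := abs_sub_le _ _ _
    have e : |g b - g x₀| = |g x₀ - g b| := abs_sub_comm _ _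
    rw [e] at htri
    calc |g b - g a| ≤ |g x₀ - g b| + |g x₀ - g a| := htri
      _ ≤ M + M := add_le_add bound2 bound1
      _ = 2 * M := by ring
  -- final algebra
  rw [← ENNReal.ofReal_toReal hT]
  apply ENNReal.ofReal_le_ofReal
  rw [← hBr]
  have hba0 : (0:ℝ) < b - a := by linarith
  have hbat : 0 < (b-a) ^ (t-1) := Real.rpow_pos_of_pos hba0 _
  have hM0 : 0 ≤ M := by
    rw [hMdef]
    have h1 : (0:ℝ) ≤ (4*Br) ^ p⁻¹ := Real.rpow_nonneg (by linarith) _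
    have h2 : (0:ℝ) ≤ (b-a) ^ ((t-1)/p) := Real.rpow_nonneg hba0.le _
    have h3 : (0:ℝ) < m := div_pos ht0 ht1
    positivity
  have hDp : |g b - g a| ^ p ≤ (2*M) ^ p :=
    Real.rpow_le_rpow (abs_nonneg _) hD hp.le
  set K := 8 * m * (b-a) ^ ((t-1)/p) with hKdef
  have hK0 : 0 ≤ K := by
    have h2 : (0:ℝ) ≤ (b-a) ^ ((t-1)/p) := Real.rpow_nonneg hba0.le _
    have h3 : (0:ℝ) < m := div_pos ht0 ht1
    rw [hKdef]
    positivity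
  have h2M : 2 * M = K * (4*Br) ^ p⁻¹ := by
    rw [hMdef, hKdef]
    ring
  have hKp : (2*M) ^ p = K ^ p * (4 * Br) := by
    rw [h2M, Real.mul_rpow hK0 (Real.rpow_nonneg (by linarith) _),
      Real.rpow_inv_rpow (by linarith) hp']
  have hKpow : K ^ p = 8 ^ p * m ^ p * (b-a) ^ (t-1) := by
    have e : ((b-a) ^ ((t-1)/p)) ^ p = (b-a) ^ (t-1) := by
      rw [← Real.rpow_mul hba0.le]
      congr 1
      field_simp
    have hm0' : (0:ℝ) < m := div_pos ht0 ht1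
    rw [hKdef, Real.mul_rpow (by positivity : (0:ℝ) ≤ 8 * m) (Real.rpow_nonneg hba0.le _),
      Real.mul_rpow (by norm_num : (0:ℝ) ≤ 8) hm0'.le, e]
  have hfinal : |g b - g a| ^ p ≤ 8 ^ p * m ^ p * (b-a) ^ (t-1) * (4*Br) := by
    calc |g b - g a| ^ p ≤ (2*M) ^ p := hDp
      _ = K ^ p * (4*Br) := hKp
      _ = 8 ^ p * m ^ p * (b-a) ^ (t-1) * (4*Br) := by rw [hKpow]
  have hgoal1 : |g b - g a| ^ p / (b-a) ^ (t-1) ≤ 8 ^ p * m ^ p * (4*Br) := by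
    rw [div_le_iff₀ hbat]
    calc |g b - g a| ^ p ≤ 8 ^ p * m ^ p * (b-a) ^ (t-1) * (4*Br) := hfinal
      _ = 8 ^ p * m ^ p * (4*Br) * (b-a) ^ (t-1) := by ring
  have h8p : (0:ℝ) < (8:ℝ) ^ p := Real.rpow_pos_of_pos (by norm_num) _
  have ht1p : (0:ℝ) < (t-1) ^ p := Real.rpow_pos_of_pos ht1 _
  have ht0p : (0:ℝ) < (t+1) ^ p := Real.rpow_pos_of_pos ht0 _
  have hc0 : (0:ℝ) ≤ (t-1) ^ p * (8*(t+1)) ^ (-p) / 4 := by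
    have h9 : (0:ℝ) ≤ (8*(t+1)) ^ (-p) :=
      Real.rpow_nonneg (by linarith : (0:ℝ) ≤ 8*(t+1)) _
    positivity
  have hkey : (t-1) ^ p * (8*(t+1)) ^ (-p) / 4 * (8 ^ p * m ^ p * (4*Br)) = Br := by
    rw [Real.rpow_neg (by linarith : (0:ℝ) ≤ 8*(t+1)),
      Real.mul_rpow (by norm_num : (0:ℝ) ≤ 8) (by linarith : (0:ℝ) ≤ t+1),
      hmdef, Real.div_rpow (by linarith : (0:ℝ) ≤ t+1) (by linarith : (0:ℝ) ≤ t-1)]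
    field_simp
  calc (t-1) ^ p * (8*(t+1)) ^ (-p) / 4 * (|g b - g a| ^ p / (b-a) ^ (t-1))
      ≤ (t-1) ^ p * (8*(t+1)) ^ (-p) / 4 * (8 ^ p * m ^ p * (4*Br)) :=
        mul_le_mul_of_nonneg_left hgoal1 hc0
    _ = Br := hkey
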